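/- Greedy multi-coloring lemma: Let V be a finite set with a weight function w : V × V → [0,1], demands x : V → [0,1], and an injective length function d : V → ℝ. Assume for all u ∈ V: x(u) + Σ_{v : d(v) > d(u)} w(v,u)·x(v) ≤ 1. Then for every positive integer T there exists a multi-coloring π : V → Finset(Fin T) such that (1) for every color c and every u with c ∈ π(u), Σ_{v : d(v) > d(u), c ∈ π(v)} w(v,u) ≤ 1, and (2) |π(u)| ≥ ⌊x(u)·T⌋ for every u. -/

import Mathlib

theorem greedy_multicoloring {ι : Type*} [Fintype ι] [DecidableEq ι]
    (w : ι → ι → ℝ) (x : ι → ℝ) (d : ι → ℝ)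
    (hw : ∀ v u, 0 ≤ w v u ∧ w v u ≤ 1)
    (hx : ∀ u, 0 ≤ x u ∧ x u ≤ 1)
    (hd : Function.Injective d)
    (hLP : ∀ u, x u + ∑ v ∈ Finset.univ.filter (fun v => d u < d v),
          w v u * x v ≤ 1)
    (T : ℕ) (hT : 0 < T) :
    ∃ π : ι → Finset (Fin T),
      (∀ c : Fin T, ∀ u, c ∈ π u →
        ∑ v ∈ Finset.univ.filter (fun v => d u < d v ∧ c ∈ π v), w v u ≤ 1) ∧
      (∀ u, ⌊x u * T⌋ ≤ ((π u).card : ℤ)) := by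
  classical
  set m : ι → ℕ := fun u => ⌊x u * T⌋₊ with hm
  have key : ∀ n (s : Finset ι), s.card = n →
      (∀ u ∈ s, ∀ v, d u < d v → v ∈ s) →
      ∃ π : ι → Finset (Fin T),
        (∀ u, u ∉ s → π u = ∅) ∧ (∀ u ∈ s, (π u).card = m u) ∧
        (∀ c : Fin T, ∀ u, c ∈ π u →
          ∑ v ∈ Finset.univ.filter (fun v => d u < d v ∧ c ∈ π v), w v u ≤ 1) := by
    intro n
    induction n with
    | zero =>
      intro s hs _
      rw [Finset.card_eq_zero] at hs; subst hs
      refine ⟨fun _ => ∅, fun _ _ => rfl, fun u hu => absurd hu (by simp), ?_⟩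
      intro c u hc; exact absurd hc (by simp)
    | succ n ih =>
      intro s hs hup
      have hne : s.Nonempty := Finset.card_pos.mp (by omega)
      obtain ⟨u, hus, humin⟩ := s.exists_min_image d hne
      set s' := s.erase u with hs'
      have hcard' : s'.card = n := by
        rw [hs', Finset.card_erase_of_mem hus, hs]; omega
      have hup' : ∀ a ∈ s', ∀ v, d a < d v → v ∈ s' := by
        intro a ha v hav
        have has : a ∈ s := Finset.mem_of_mem_erase ha
        have hvs : v ∈ s := hup a has v hav
        refine Finset.mem_erase.mpr ⟨?_, hvs⟩
        rintro rfl
        exact absurd hav (not_lt.mpr (humin a has))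
      obtain ⟨π', h0', hcardπ', hcon'⟩ := ih s' hcard' hup'
      -- the set of longer vertices
      set F := Finset.univ.filter (fun v => d u < d v) with hF
      have hFs' : ∀ v ∈ F, v ∈ s' := by
        intro v hv
        rw [hF, Finset.mem_filter] at hv
        refine Finset.mem_erase.mpr ⟨?_, hup u hus v hv.2⟩
        rintro rfl; exact lt_irrefl _ hv.2
      -- load of each color
      set L : Fin T → ℝ := fun c => ∑ v ∈ F.filter (fun v => c ∈ π' v), w v u with hL
      have hL0 : ∀ c, 0 ≤ L c := fun c =>
        Finset.sum_nonneg fun v _ => (hw v u).1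
      set B := Finset.univ.filter (fun c => 1 < L c) with hB
      have hsum : ∑ c, L c = ∑ v ∈ F, ((π' v).card : ℝ) * w v u := by
        simp only [hL, Finset.sum_filter]
        rw [Finset.sum_comm]
        refine Finset.sum_congr rfl fun v _ => ?_
        rw [Finset.sum_ite_mem, Finset.univ_inter, Finset.sum_const, nsmul_eq_mul]
      have hbound : ∑ c, L c ≤ (1 - x u) * T := by
        rw [hsum]
        have h1 : ∑ v ∈ F, ((π' v).card : ℝ) * w v u ≤ ∑ v ∈ F, (w v u * x v) * T := by
          refine Finset.sum_le_sum fun v hv => ?_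
          rw [hcardπ' v (hFs' v hv)]
          have hfl : ((m v : ℝ)) ≤ x v * T :=
            Nat.floor_le (mul_nonneg (hx v).1 (Nat.cast_nonneg T))
          calc ((m v : ℝ)) * w v u ≤ (x v * T) * w v u :=
                mul_le_mul_of_nonneg_right hfl (hw v u).1
            _ = (w v u * x v) * T := by ring
        refine h1.trans ?_
        rw [← Finset.sum_mul]
        have h2 : ∑ v ∈ F, w v u * x v ≤ 1 - x u := by
          have := hLP u
          rw [hF]; linarith
        exact mul_le_mul_of_nonneg_right h2 (Nat.cast_nonneg T)
      set G := (Finset.univ : Finset (Fin T)) \ B with hG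
      have hGood : ∀ c ∈ G, L c ≤ 1 := by
        intro c hc
        rw [hG, Finset.mem_sdiff, hB, Finset.mem_filter] at hc
        push_neg at hc
        exact hc.2 (Finset.mem_univ c)
      have hmG : m u ≤ G.card := by
        have hxuT : ((m u : ℝ)) ≤ x u * T :=
          Nat.floor_le (mul_nonneg (hx u).1 (Nat.cast_nonneg T))
        have hGcard : G.card = T - B.card := by
          rw [hG, Finset.card_sdiff_of_subset (Finset.subset_univ B), Finset.card_univ, Fintype.card_fin]
        have hBle : B.card ≤ T := by
          simpa using (Finset.card_le_univ B)
        have hrealG : ((G.card : ℝ)) = (T : ℝ) - B.card := by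
          rw [hGcard, Nat.cast_sub hBle]
        have hmain : ((m u : ℝ)) ≤ ((G.card : ℝ)) := by
          rcases B.eq_empty_or_nonempty with hBe | hBne
          · rw [hrealG, hBe]
            simp only [Finset.card_empty, Nat.cast_zero, sub_zero]
            calc ((m u : ℝ)) ≤ x u * T := hxuT
              _ ≤ 1 * T := mul_le_mul_of_nonneg_right (hx u).2 (Nat.cast_nonneg T)
              _ = T := one_mul _
          · have hlt : ((B.card : ℝ)) < (1 - x u) * T := by
              have h3 : ((B.card : ℝ)) < ∑ c ∈ B, L c := by
                have : ((B.card : ℝ)) = ∑ _c ∈ B, (1:ℝ) := by simp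
                rw [this]
                refine Finset.sum_lt_sum_of_nonempty hBne fun c hc => ?_
                rw [hB, Finset.mem_filter] at hc
                exact hc.2
              have h4 : ∑ c ∈ B, L c ≤ ∑ c, L c :=
                Finset.sum_le_sum_of_subset_of_nonneg (Finset.subset_univ B)
                  (fun c _ _ => hL0 c)
              linarith
            rw [hrealG]
            nlinarith
        exact_mod_cast hmain
      obtain ⟨S, hSG, hScard⟩ := Finset.exists_subset_card_eq hmG
      set π : ι → Finset (Fin T) := Function.update π' u S with hπ
      have hπu : π u = S := Function.update_self u S π'
      have hπne : ∀ v, v ≠ u → π v = π' v := fun v hv => Function.update_of_ne hv S π'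
      refine ⟨π, ?_, ?_, ?_⟩
      · intro a ha
        have hau : a ≠ u := fun h => ha (h ▸ hus)
        rw [hπne a hau]
        exact h0' a (fun h => ha (Finset.mem_of_mem_erase h))
      · intro a ha
        by_cases hau : a = u
        · subst hau; rw [hπu, hScard]
        · rw [hπne a hau]
          exact hcardπ' a (Finset.mem_erase.mpr ⟨hau, ha⟩)
      · intro c a hca
        by_cases hau : a = u
        · rw [hau] at hca ⊢
          rw [hπu] at hca
          have hcG : c ∈ G := hSG hca
          have heq : Finset.univ.filter (fun v => d u < d v ∧ c ∈ π v)
              = F.filter (fun v => c ∈ π' v) := by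
            rw [hF, Finset.filter_filter]
            ext v
            simp only [Finset.mem_filter, Finset.mem_univ, true_and]
            constructor
            · rintro ⟨h1, h2⟩
              have hvu : v ≠ u := by rintro rfl; exact lt_irrefl _ h1
              exact ⟨h1, (hπne v hvu) ▸ h2⟩
            · rintro ⟨h1, h2⟩
              have hvu : v ≠ u := by rintro rfl; exact lt_irrefl _ h1
              exact ⟨h1, (hπne v hvu).symm ▸ h2⟩
          rw [heq]
          exact hGood c hcG
        · have hca' : c ∈ π' a := by rwa [hπne a hau] at hca
          have has' : a ∈ s' := by
            by_contra h
            rw [h0' a h] at hca'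
            exact absurd hca' (Finset.notMem_empty c)
          have hda : d u < d a := by
            have hle : d u ≤ d a := humin a (Finset.mem_of_mem_erase has')
            rcases lt_or_eq_of_le hle with h | h
            · exact h
            · exact absurd (hd h) (fun he => (Finset.mem_erase.mp has').1 he.symm)
          have heq : Finset.univ.filter (fun v => d a < d v ∧ c ∈ π v)
              = Finset.univ.filter (fun v => d a < d v ∧ c ∈ π' v) := by
            ext v
            simp only [Finset.mem_filter, Finset.mem_univ, true_and]
            have : ∀ (h1 : d a < d v), v ≠ u := by
              rintro h1 rfl; exact lt_asymm hda h1
            constructor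
            · rintro ⟨h1, h2⟩; exact ⟨h1, (hπne v (this h1)) ▸ h2⟩
            · rintro ⟨h1, h2⟩; exact ⟨h1, (hπne v (this h1)).symm ▸ h2⟩
          rw [heq]
          exact hcon' c a hca'
  obtain ⟨π, _, hcardπ, hcon⟩ := key Finset.univ.card Finset.univ rfl
    (fun u _ v _ => Finset.mem_univ v)
  refine ⟨π, hcon, fun u => ?_⟩
  rw [hcardπ u (Finset.mem_univ u), hm]
  have h0 : (0:ℝ) ≤ x u * T := mul_nonneg (hx u).1 (Nat.cast_nonneg T)
  exact le_of_eq (Int.natCast_floor_eq_floor h0).symm
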